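/- Let A be a central hyperplane arrangement in K^l with defining polynomial Q(A), and let X be a flat of A (an intersection of some hyperplanes of A) with corresponding prime ideal I(X) generated by the linear forms of the hyperplanes containing X. Let A_X be the localization of A at X, i.e., the subarrangement of hyperplanes containing X. Then the Jacobian ideal of A and the Jacobian ideal of A_X generate the same ideal in the localized ring S_{I(X)}: J(A)·S_{I(X)} = J(A_X)·S_{I(X)}. -/

import Mathlib

open MvPolynomial

/-- The polynomial ring `S = K[x_1,...,x_l]`. -/
abbrev PolyS (K : Type*) [CommSemiring K] (l : ℕ) := MvPolynomial (Fin l) K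

/-- A central hyperplane arrangement in `K^l`, given by its finite set of
(nonzero, homogeneous of degree 1) defining linear forms. -/
structure Arrangement (K : Type*) [Field K] (l : ℕ) where
  forms : Finset (PolyS K l)
  homog : ∀ f ∈ forms, MvPolynomial.IsHomogeneous f 1
  nonzero : ∀ f ∈ forms, f ≠ 0

namespace Arrangement

variable {K : Type*} [Field K] {l : ℕ}

/-- The defining polynomial `Q(A)`. -/
noncomputable def Q (A : Arrangement K l) : PolyS K l := ∏ f ∈ A.forms, f

/-- The Jacobian ideal `J(A)`, generated by `Q(A)` and its partial derivatives. -/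
noncomputable def jac (A : Arrangement K l) : Ideal (PolyS K l) :=
  Ideal.span ({A.Q} ∪ Set.range fun i : Fin l => pderiv i A.Q)

/-- The hyperplane (zero set) of a linear form. -/
def zeroSet (f : PolyS K l) : Set (Fin l → K) := {v | eval v f = 0}

/-- `X` is a flat (element of the intersection lattice `L(A)`). -/
def IsFlat (A : Arrangement K l) (X : Set (Fin l → K)) : Prop :=
  ∃ B : Finset (PolyS K l), B ⊆ A.forms ∧ X = ⋂ f ∈ B, zeroSet f

/-- The localization `A_X` of `A` at a flat `X`: hyperplanes containing `X`. -/
noncomputable def locArr (A : Arrangement K l) (X : Set (Fin l → K)) : Arrangement K l :=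
  letI : DecidablePred fun f : PolyS K l => X ⊆ zeroSet f := fun _ => Classical.propDecidable _
  { forms := A.forms.filter fun f => X ⊆ zeroSet f
    homog := fun f hf => A.homog f (Finset.mem_filter.mp hf).1
    nonzero := fun f hf => A.nonzero f (Finset.mem_filter.mp hf).1 }

/-- The ideal `I(X)` generated by the linear forms of hyperplanes containing `X`. -/
noncomputable def flatIdeal (A : Arrangement K l) (X : Set (Fin l → K)) : Ideal (PolyS K l) :=
  Ideal.span {f | f ∈ A.forms ∧ X ⊆ zeroSet f}

/-- The coefficient (normal) vector of a linear form. -/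
noncomputable def coeffVec (f : PolyS K l) : Fin l → K :=
  fun i => MvPolynomial.coeff (Finsupp.single i 1) f

/-- The rank (codimension) of a flat `X`, as the dimension of the span of the
normal vectors of the hyperplanes containing `X`. -/
noncomputable def flatRank (A : Arrangement K l) (X : Set (Fin l → K)) : ℕ :=
  Module.finrank K (Submodule.span K (coeffVec '' {f | f ∈ A.forms ∧ X ⊆ zeroSet f}))

/-- The module `D(A)` of logarithmic derivations, viewed as the submodule of
`S^l` of coefficient vectors `δ` with `δ(Q(A)) ∈ ⟨Q(A)⟩`. -/
noncomputable def derMod (A : Arrangement K l) : Submodule (PolyS K l) (Fin l → PolyS K l) where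
  carrier := {δ | (∑ i, δ i * pderiv i A.Q) ∈ Ideal.span {A.Q}}
  add_mem' := by
    intro a b ha hb
    simp only [Set.mem_setOf_eq, Pi.add_apply, add_mul, Finset.sum_add_distrib] at *
    exact Ideal.add_mem _ ha hb
  zero_mem' := by simp
  smul_mem' := by
    intro c a ha
    simp only [Set.mem_setOf_eq, Pi.smul_apply, smul_eq_mul, mul_assoc, ← Finset.mul_sum] at *
    exact Ideal.mul_mem_left _ _ ha

/-- The submodule `D_0(A) = {δ : δ(Q(A)) = 0}`. -/
noncomputable def derMod0 (A : Arrangement K l) : Submodule (PolyS K l) (Fin l → PolyS K l) :=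
  LinearMap.ker
    ((Fintype.bilinearCombination (PolyS K l) (PolyS K l)) fun i : Fin l => pderiv i A.Q)

/-- `A` is a free arrangement: `D(A)` is a free `S`-module. -/
def IsFreeArr (A : Arrangement K l) : Prop := Module.Free (PolyS K l) A.derMod

end Arrangement

/-- The graded maximal ideal `(x_1,...,x_l)` of `S`. -/
noncomputable def mIdeal (K : Type*) [Field K] (l : ℕ) : Ideal (PolyS K l) :=
  Ideal.span (Set.range (MvPolynomial.X : Fin l → PolyS K l))

/-- A finite minimal free resolution of an `R`-module `M`, with minimality meaning
that all entries of the differentials lie in the ideal `m`; `b n` is the `n`-th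
(total) Betti number, i.e. the rank of the `n`-th free module. -/
structure MinFreeRes (R : Type*) [CommRing R] (m : Ideal R)
    (M : Type*) [AddCommGroup M] [Module R M] (b : ℕ → ℕ) where
  len : ℕ
  aug : (Fin (b 0) → R) →ₗ[R] M
  d : (n : ℕ) → ((Fin (b (n + 1)) → R) →ₗ[R] (Fin (b n) → R))
  aug_surj : Function.Surjective aug
  exact_aug : LinearMap.range (d 0) = LinearMap.ker aug
  exact : ∀ n, LinearMap.range (d (n + 1)) = LinearMap.ker (d n)
  minimal : ∀ n j i, d n (Pi.single j 1) i ∈ m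
  finite : ∀ n, len < n → b n = 0

open Arrangement in
/-- For a central arrangement `A` and a flat `X` with prime ideal `I(X)`, the Jacobian
ideal of `A` and the Jacobian ideal of the localized arrangement `A_X` generate the same
ideal in the localized ring `S_{I(X)}`. -/
theorem jac_map_localization_eq {K : Type*} [Field K] [CharZero K] {l : ℕ}
    (A : Arrangement K l) (X : Set (Fin l → K)) (hX : A.IsFlat X)
    [(A.flatIdeal X).IsPrime] :
    (A.jac).map (algebraMap (PolyS K l) (Localization.AtPrime (A.flatIdeal X))) =
      ((A.locArr X).jac).map
        (algebraMap (PolyS K l) (Localization.AtPrime (A.flatIdeal X))) := by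
  classical
  set p : Ideal (PolyS K l) := A.flatIdeal X with hp
  set L := Localization.AtPrime (A.flatIdeal X)
  set φ := algebraMap (PolyS K l) L with hφ
  set R : PolyS K l := ∏ f ∈ A.forms.filter (fun f => ¬ X ⊆ zeroSet f), f with hRdef
  have hforms : (A.locArr X).forms = A.forms.filter (fun f => X ⊆ zeroSet f) := by
    simp [locArr, Finset.filter_congr_decidable]
  have hQ : A.Q = (A.locArr X).Q * R := by
    rw [Q, Q, hforms, hRdef]
    exact (Finset.prod_filter_mul_prod_filter_not _ _ _).symm
  -- each factor of R is outside p
  have hfac : ∀ f ∈ A.forms.filter (fun f => ¬ X ⊆ zeroSet f), f ∈ p.primeCompl := by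
    intro f hf
    rw [Finset.mem_filter] at hf
    obtain ⟨v, hvX, hvf⟩ := Set.not_subset.mp hf.2
    intro hfp
    apply hvf
    have hle : p ≤ RingHom.ker (MvPolynomial.eval v) := by
      rw [hp, flatIdeal, Ideal.span_le]
      intro g hg
      exact hg.2 hvX
    exact hle hfp
  have hRmem : R ∈ p.primeCompl := Submonoid.prod_mem _ hfac
  have hu : IsUnit (φ R) := IsLocalization.map_units L ⟨R, hRmem⟩
  -- membership of generators
  have hQA : A.Q ∈ A.jac := Ideal.subset_span (Or.inl rfl)
  have hdQA : ∀ i : Fin l, pderiv i A.Q ∈ A.jac := fun i =>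
    Ideal.subset_span (Or.inr ⟨i, rfl⟩)
  have hQloc : (A.locArr X).Q ∈ (A.locArr X).jac := Ideal.subset_span (Or.inl rfl)
  have hdQloc : ∀ i : Fin l, pderiv i (A.locArr X).Q ∈ (A.locArr X).jac := fun i =>
    Ideal.subset_span (Or.inr ⟨i, rfl⟩)
  have hderiv : ∀ i : Fin l,
      pderiv i A.Q = pderiv i (A.locArr X).Q * R + (A.locArr X).Q * pderiv i R := by
    intro i; rw [hQ, pderiv_mul]
  apply le_antisymm
  · -- jac A ≤ jac (locArr X), so map ≤ map
    apply Ideal.map_mono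
    rw [jac, Ideal.span_le]
    rintro g (rfl | ⟨i, rfl⟩)
    · rw [hQ]; exact Ideal.mul_mem_right _ _ hQloc
    · show pderiv i A.Q ∈ ((A.locArr X).jac : Set (PolyS K l))
      rw [hderiv i]
      exact Ideal.add_mem _ (Ideal.mul_mem_right _ _ (hdQloc i))
        (Ideal.mul_mem_right _ _ hQloc)
  · rw [Ideal.map_le_iff_le_comap, jac, Ideal.span_le]
    have hQlocmem : φ ((A.locArr X).Q) ∈ (A.jac).map φ := by
      have h1 : φ ((A.locArr X).Q) = φ A.Q * ↑hu.unit⁻¹ := by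
        rw [hQ, map_mul, mul_assoc, IsUnit.mul_val_inv, mul_one]
      rw [h1]
      exact Ideal.mul_mem_right _ _ (Ideal.mem_map_of_mem φ hQA)
    rintro g (rfl | ⟨i, rfl⟩)
    · exact hQlocmem
    · show φ (pderiv i (A.locArr X).Q) ∈ (A.jac).map φ
      have h2 : φ (pderiv i (A.locArr X).Q) * φ R
          = φ (pderiv i A.Q) - φ ((A.locArr X).Q) * φ (pderiv i R) := by
        rw [hderiv i]; push_cast [map_add, map_mul]; ring
      have h3 : φ (pderiv i (A.locArr X).Q)
          = (φ (pderiv i A.Q) - φ ((A.locArr X).Q) * φ (pderiv i R)) * ↑hu.unit⁻¹ := by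
        rw [← h2, mul_assoc, IsUnit.mul_val_inv, mul_one]
      rw [h3]
      refine Ideal.mul_mem_right _ _ (Ideal.sub_mem _ ?_ ?_)
      · exact Ideal.mem_map_of_mem φ (hdQA i)
      · exact Ideal.mul_mem_right _ _ hQlocmem
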